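/- Let p be a prime with p ≡ 1 (mod 6), let 4p = A² + 27B² with A ≡ 1 (mod 3) and B > 0, and let n_{ik} be the transition numbers of the cubic residue cosets. Then A = 9·n₁₂ - p - 1 and B = |n₀₂ - n₀₁|. -/

import Mathlib

open Finset
open scoped Classical

/-- `Gcoset p g k` is the coset `G_k = {g^j : j ≡ k (mod 3)}` of the subgroup `G₀` of
cubic residues in `(ℤ/pℤ)*`, where `g` is a fixed generator of `(ℤ/pℤ)*`. -/
def Gcoset (p : ℕ) (g : ZMod p) (k : ZMod 3) : Set (ZMod p) :=
  {x | ∃ j : ℕ, (j : ZMod 3) = k ∧ x = g ^ j}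

/-- `transNum p g d i k` is the transition number `n_{ik}(d)`: the number of
`b ∈ {1,…,p-1}`, `b ≠ p-d`, with `b ∈ G_i` and `b+d ∈ G_k`. -/
noncomputable def transNum (p : ℕ) (g : ZMod p) (d : ℕ) (i k : ZMod 3) : ℕ :=
  Nat.card {b : ℕ // 1 ≤ b ∧ b ≤ p - 1 ∧ b ≠ p - d ∧
    (b : ZMod p) ∈ Gcoset p g i ∧ (b : ZMod p) + (d : ZMod p) ∈ Gcoset p g k}

noncomputable def ω : ℂ := Complex.exp (2 * Real.pi * Complex.I / 3)

lemma omega_prim : IsPrimitiveRoot ω 3 := Complex.isPrimitiveRoot_exp 3 (by norm_num)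

lemma omega_cube : ω ^ 3 = 1 := omega_prim.pow_eq_one

lemma omega_ne_one : ω ≠ 1 := by
  intro h
  exact (omega_prim.pow_ne_one_of_pos_of_lt (l := 1) (by norm_num) (by norm_num)) (by rw [pow_one, h])

lemma omega_sq_ne_one : ω ^ 2 ≠ 1 :=
  omega_prim.pow_ne_one_of_pos_of_lt (by norm_num) (by norm_num)

lemma omega_sum : ω ^ 2 + ω + 1 = 0 := by
  have h1 : (ω - 1) * (ω ^ 2 + ω + 1) = 0 := by
    have := omega_cube
    linear_combination this - 1
  rcases mul_eq_zero.mp h1 with h | h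
  · exact absurd (sub_eq_zero.mp h) omega_ne_one
  · exact h

lemma zmod3_cases : ∀ k : ZMod 3, k = 0 ∨ k = 1 ∨ k = 2 := by decide

lemma val_natCast_id {n : ℕ} [NeZero n] (x : ZMod n) : ((x.val : ℕ) : ZMod n) = x :=
  ZMod.natCast_rightInverse x

lemma omega_pow_mod (j : ℕ) : ω ^ j = ω ^ (j % 3) := by
  conv_lhs => rw [← Nat.mod_add_div j 3, pow_add, pow_mul, omega_cube, one_pow, mul_one]


namespace Stmt7

variable {p : ℕ} (hp : p.Prime) (hp6 : p % 6 = 1) {g : ZMod p}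
  (hg : ∀ x : ZMod p, x ≠ 0 → ∃ j : ℕ, x = g ^ j)

include hp hp6 hg
set_option linter.unusedSectionVars false
variable [Fact p.Prime]

omit hg in lemma p7 : 7 ≤ p := by
  have := hp.two_le; omega

omit hp6 hg in lemma fact_p : Fact p.Prime := ⟨hp⟩

lemma g_ne : g ≠ 0 := by
  haveI : Fact p.Prime := ⟨hp⟩
  have h1 : (-1 : ZMod p) ≠ 0 := by
    simp only [ne_eq, neg_eq_zero]; exact one_ne_zero
  obtain ⟨j, hj⟩ := hg _ h1
  intro h0
  subst h0
  rcases j with _ | j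
  · simp only [pow_zero] at hj
    have : ((2 : ℕ) : ZMod p) = 0 := by push_cast; linear_combination -hj
    rw [ZMod.natCast_eq_zero_iff] at this
    have := Nat.le_of_dvd (by norm_num) this
    have := p7 hp hp6; omega
  · rw [zero_pow (Nat.succ_ne_zero j)] at hj
    exact h1 hj

lemma horder : orderOf g = p - 1 := by
  haveI : Fact p.Prime := ⟨hp⟩
  have hg0 := g_ne hp hp6 hg
  have h1 : orderOf g ∣ p - 1 := orderOf_dvd_of_pow_eq_one (ZMod.pow_card_sub_one_eq_one hg0)
  have hpos : 0 < orderOf g := by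
    refine orderOf_pos_iff.mpr (isOfFinOrder_iff_pow_eq_one.mpr ⟨p - 1, by have := p7 hp hp6; omega, ZMod.pow_card_sub_one_eq_one hg0⟩)
  have h2 : p - 1 ≤ orderOf g := by
    have hsub : (univ.erase (0 : ZMod p)) ⊆ (Finset.range (orderOf g)).image (fun j => g ^ j) := by
      intro x hx
      obtain ⟨j, hj⟩ := hg x (Finset.mem_erase.mp hx).1
      refine Finset.mem_image.mpr ⟨j % orderOf g, Finset.mem_range.mpr (Nat.mod_lt _ hpos), ?_⟩
      rw [pow_mod_orderOf]; exact hj.symm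
    have := Finset.card_le_card hsub
    have h3 := Finset.card_image_le (s := Finset.range (orderOf g)) (f := fun j => g ^ j)
    rw [Finset.card_erase_of_mem (Finset.mem_univ _), Finset.card_univ, ZMod.card,
      Finset.card_range] at *
    omega
  exact Nat.le_antisymm (Nat.le_of_dvd (by have := p7 hp hp6; omega) h1) h2

lemma three_dvd : 3 ∣ p - 1 := by omega

lemma pow_inj {a b : ℕ} (h : g ^ a = g ^ b) : a ≡ b [MOD p - 1] := by
  haveI : Fact p.Prime := ⟨hp⟩
  have hg0 := g_ne hp hp6 hg
  wlog hab : a ≤ b generalizing a b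
  · exact (this h.symm (by omega)).symm
  have h1 : g ^ a * g ^ (b - a) = g ^ a * 1 := by
    rw [← pow_add, mul_one, h]
    congr 1; omega
  have h2 : g ^ (b - a) = 1 := mul_left_cancel₀ (pow_ne_zero _ hg0) h1
  have h3 : (p - 1) ∣ (b - a) := by
    rw [← horder hp hp6 hg]; exact orderOf_dvd_of_pow_eq_one h2
  exact (Nat.modEq_iff_dvd' hab).mpr h3

lemma coset_ne_zero {x : ZMod p} {i : ZMod 3} (hx : x ∈ Gcoset p g i) : x ≠ 0 := by
  haveI : Fact p.Prime := ⟨hp⟩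
  obtain ⟨j, _, rfl⟩ := hx
  exact pow_ne_zero _ (g_ne hp hp6 hg)

lemma pow_mem (j : ℕ) : (g : ZMod p) ^ j ∈ Gcoset p g (j : ZMod 3) := ⟨j, rfl, rfl⟩

lemma coset_unique {x : ZMod p} {i k : ZMod 3} (hx : x ∈ Gcoset p g i)
    (hx' : x ∈ Gcoset p g k) : i = k := by
  obtain ⟨j, hj, rfl⟩ := hx
  obtain ⟨j', hj', he⟩ := hx'
  have h3 := (Nat.ModEq.of_dvd (three_dvd hp hp6 hg) (pow_inj hp hp6 hg he))
  rw [← hj, ← hj']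
  exact (ZMod.natCast_eq_natCast_iff _ _ _).mpr h3

lemma classify {x : ZMod p} (hx : x ≠ 0) : ∃ i, x ∈ Gcoset p g i := by
  obtain ⟨j, hj⟩ := hg x hx
  exact ⟨(j : ZMod 3), j, rfl, hj⟩

lemma mem_mul {x y : ZMod p} {i k : ZMod 3} (hx : x ∈ Gcoset p g i)
    (hy : y ∈ Gcoset p g k) : x * y ∈ Gcoset p g (i + k) := by
  obtain ⟨j, hj, rfl⟩ := hx
  obtain ⟨j', hj', rfl⟩ := hy
  exact ⟨j + j', by push_cast [hj, hj']; ring, (pow_add g j j').symm⟩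


lemma mem_inv {x : ZMod p} {i : ZMod 3} (hx : x ∈ Gcoset p g i) : x⁻¹ ∈ Gcoset p g (-i) := by
  haveI : Fact p.Prime := ⟨hp⟩
  obtain ⟨j, hj, rfl⟩ := hx
  refine ⟨(p - 2) * j, ?_, ?_⟩
  · push_cast [Nat.cast_sub (by have := p7 hp hp6; omega : 2 ≤ p)]
    have hp3 : ((p : ℕ) : ZMod 3) = 1 := by
      have h31 : p % 3 = 1 := by omega
      rw [← ZMod.natCast_mod p 3, h31]; norm_num
    rw [hp3, hj]; ring
  · have h1 : g ^ j * g ^ ((p - 2) * j) = 1 := by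
      rw [← pow_add]
      have he : j + (p - 2) * j = (p - 1) * j := by
        have h2le : (2:ℕ) ≤ p := by have := p7 hp hp6; omega
        have : p - 1 = (p - 2) + 1 := by omega
        rw [this, Nat.succ_mul]; omega
      rw [he, pow_mul, ZMod.pow_card_sub_one_eq_one (g_ne hp hp6 hg), one_pow]
    exact inv_eq_of_mul_eq_one_right h1

lemma neg_one_mem : (-1 : ZMod p) ∈ Gcoset p g 0 := by
  haveI : Fact p.Prime := ⟨hp⟩
  have h1 : (-1 : ZMod p) ≠ 0 := by simp only [ne_eq, neg_eq_zero]; exact one_ne_zero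
  obtain ⟨j, hj⟩ := hg _ h1
  have h2 : g ^ (2 * j) = g ^ 0 := by
    rw [pow_zero, two_mul, pow_add, ← hj]; ring
  have hd : (p-1) ∣ 2 * j := (Nat.modEq_zero_iff_dvd).mp (pow_inj hp hp6 hg h2)
  have h3 : 3 ∣ j := by
    obtain ⟨c, hc⟩ := hd
    obtain ⟨t, ht⟩ : (6:ℕ) ∣ p - 1 := by omega
    refine ⟨t * c, ?_⟩
    have : 2 * j = 6 * (t * c) := by rw [hc, ht]; ring
    omega
  exact ⟨j, by obtain ⟨c, rfl⟩ := h3; exact (ZMod.natCast_eq_zero_iff _ _).mpr ⟨c, rfl⟩, hj⟩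

lemma neg_mem {x : ZMod p} {i : ZMod 3} (hx : x ∈ Gcoset p g i) : -x ∈ Gcoset p g i := by
  have := mem_mul hp hp6 hg (neg_one_mem hp hp6 hg) hx
  rwa [neg_one_mul, zero_add] at this

noncomputable def chi (hg : ∀ x : ZMod p, x ≠ 0 → ∃ j : ℕ, x = g ^ j) (x : ZMod p) : ℂ :=
  if hx : x = 0 then 0 else ω ^ (hg x hx).choose

omit hp hp6 in lemma chi_zero : chi hg 0 = 0 := dif_pos rfl

lemma chi_coset {x : ZMod p} {k : ZMod 3} (hx : x ∈ Gcoset p g k) :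
    chi hg x = ω ^ k.val := by
  have hx0 : x ≠ 0 := coset_ne_zero hp hp6 hg hx
  rw [chi, dif_neg hx0]
  have hspec : x = g ^ (hg x hx0).choose := (hg x hx0).choose_spec
  have hmem : x ∈ Gcoset p g ((hg x hx0).choose : ZMod 3) := ⟨_, rfl, hspec⟩
  have hk : ((hg x hx0).choose : ZMod 3) = k := coset_unique hp hp6 hg hmem hx
  rw [omega_pow_mod]
  congr 1
  rw [← hk, ZMod.val_natCast]

lemma chi_pow_val (i : ZMod 3) : ω ^ i.val = ω ^ ((i.val : ℕ)) := rfl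

lemma chi_mul' {x : ZMod p} (hx : x ≠ 0) (y : ZMod p) :
    chi hg (x * y) = chi hg x * chi hg y := by
  rcases eq_or_ne y 0 with rfl | hy
  · rw [mul_zero, chi_zero, mul_zero]
  obtain ⟨i, hi⟩ := classify hp hp6 hg hx
  obtain ⟨k, hk⟩ := classify hp hp6 hg hy
  rw [chi_coset hp hp6 hg hi, chi_coset hp hp6 hg hk,
    chi_coset hp hp6 hg (mem_mul hp hp6 hg hi hk), ← pow_add]
  rw [omega_pow_mod, ZMod.val_add, omega_pow_mod (i.val + k.val)]
  congr 1; omega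

lemma chi_cube {x : ZMod p} (hx : x ≠ 0) : chi hg x ^ 3 = 1 := by
  rw [chi, dif_neg hx, ← pow_mul, mul_comm, pow_mul, omega_cube, one_pow]

lemma chi_one : chi hg 1 = 1 := by
  have h1 : (1 : ZMod p) ∈ Gcoset p g 0 := ⟨0, by norm_num, by norm_num⟩
  rw [chi_coset hp hp6 hg h1, ZMod.val_zero, pow_zero]

lemma chi_g : chi hg g = ω := by
  have h1 : (g : ZMod p) ∈ Gcoset p g 1 := ⟨1, by norm_num, by norm_num⟩
  rw [chi_coset hp hp6 hg h1, ZMod.val_one, pow_one]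

lemma sum_chi : ∑ x : ZMod p, chi hg x = 0 := by
  haveI : Fact p.Prime := ⟨hp⟩
  have hg0 := g_ne hp hp6 hg
  have h1 : ∑ x : ZMod p, chi hg (g * x) = ∑ x : ZMod p, chi hg x :=
    Fintype.sum_equiv (Equiv.mulLeft₀ g hg0) _ _ (fun x => rfl)
  have h2 : ∀ x : ZMod p, chi hg (g * x) = chi hg g * chi hg x := fun x => chi_mul' hp hp6 hg hg0 x
  simp_rw [h2, ← Finset.mul_sum] at h1
  have h3 : (chi hg g - 1) * ∑ x : ZMod p, chi hg x = 0 := by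
    rw [sub_mul, one_mul, h1, sub_self]
  rcases mul_eq_zero.mp h3 with h | h
  · exact absurd (by rw [← chi_g hp hp6 hg]; exact sub_eq_zero.mp h) omega_ne_one
  · exact h

lemma sum_chi_sq : ∑ x : ZMod p, (chi hg x) ^ 2 = 0 := by
  haveI : Fact p.Prime := ⟨hp⟩
  have hg0 := g_ne hp hp6 hg
  have h1 : ∑ x : ZMod p, (chi hg (g * x)) ^ 2 = ∑ x : ZMod p, (chi hg x) ^ 2 :=
    Fintype.sum_equiv (Equiv.mulLeft₀ g hg0) _ _ (fun x => rfl)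
  have h2 : ∀ x : ZMod p, (chi hg (g * x)) ^ 2 = (chi hg g) ^ 2 * (chi hg x) ^ 2 := by
    intro x; rw [chi_mul' hp hp6 hg hg0 x, mul_pow]
  simp_rw [h2, ← Finset.mul_sum] at h1
  have h3 : ((chi hg g) ^ 2 - 1) * ∑ x : ZMod p, (chi hg x) ^ 2 = 0 := by
    rw [sub_mul, one_mul, h1, sub_self]
  rcases mul_eq_zero.mp h3 with h | h
  · exact absurd (by rw [← chi_g hp hp6 hg]; exact sub_eq_zero.mp h) omega_sq_ne_one
  · exact h


omit hp hp6 hg in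
lemma neg_one_ne_zero' : (-1 : ZMod p) ≠ 0 := by
  simp only [ne_eq, neg_eq_zero]; exact one_ne_zero

lemma cardS : (univ.filter (fun c : ZMod p => c ≠ 0 ∧ c + 1 ≠ 0)).card = p - 2 := by
  classical
  have hS : (univ.filter (fun c : ZMod p => c ≠ 0 ∧ c + 1 ≠ 0)) = univ \ {0, -1} := by
    ext c
    simp only [Finset.mem_filter, Finset.mem_univ, true_and, Finset.mem_sdiff,
      Finset.mem_insert, Finset.mem_singleton]
    constructor
    · rintro ⟨h0, h1⟩ (rfl | rfl)
      · exact h0 rfl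
      · exact h1 (by ring)
    · intro h
      push_neg at h
      exact ⟨h.1, fun hc => h.2 (by linear_combination hc)⟩
  rw [hS, Finset.card_sdiff_of_subset (Finset.subset_univ _), Finset.card_univ, ZMod.card]
  have h01 : (0 : ZMod p) ≠ -1 := fun h => neg_one_ne_zero' (p := p) h.symm
  rw [Finset.card_insert_of_notMem (by simpa using h01), Finset.card_singleton]

lemma sum_chi_erase : ∑ t ∈ univ.erase (1 : ZMod p), chi hg t = -1 := by
  haveI : Fact p.Prime := ⟨hp⟩
  have h := sum_chi hp hp6 hg
  rw [← Finset.add_sum_erase _ _ (Finset.mem_univ (1 : ZMod p)), chi_one hp hp6 hg] at h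
  linear_combination h

lemma sum_chi_sq_erase : ∑ t ∈ univ.erase (1 : ZMod p), (chi hg t) ^ 2 = -1 := by
  haveI : Fact p.Prime := ⟨hp⟩
  have h := sum_chi_sq hp hp6 hg
  rw [← Finset.add_sum_erase _ _ (Finset.mem_univ (1 : ZMod p)), chi_one hp hp6 hg] at h
  linear_combination h

lemma Wlem {t : ZMod p} (ht0 : t ≠ 0) (ht1 : t ≠ 1) :
    ∑ c ∈ univ.filter (fun c : ZMod p => c ≠ 0 ∧ c + 1 ≠ 0),
      chi hg ((c * t + 1) * (c + 1)⁻¹) = - chi hg t - 1 := by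
  haveI : Fact p.Prime := ⟨hp⟩
  classical
  have key : ∑ c ∈ univ.filter (fun c : ZMod p => c ≠ 0 ∧ c + 1 ≠ 0),
      chi hg ((c * t + 1) * (c + 1)⁻¹) = ∑ v ∈ univ \ {t, 1}, chi hg v := by
    refine Finset.sum_nbij' (fun c => (c * t + 1) * (c + 1)⁻¹)
      (fun v => (v - 1) * (t - v)⁻¹) ?_ ?_ ?_ ?_ ?_
    · intro c hc
      obtain ⟨hc0, hc1⟩ : c ≠ 0 ∧ c + 1 ≠ 0 := by simpa using hc
      simp only [Finset.mem_sdiff, Finset.mem_univ, true_and, Finset.mem_insert,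
        Finset.mem_singleton]
      push_neg
      constructor
      · intro he
        have h' : c * t + 1 = t * (c + 1) := by
          have h2 := congrArg (fun z => z * (c + 1)) he
          simp only [mul_assoc] at h2
          rwa [inv_mul_cancel₀ hc1, mul_one] at h2
        exact ht1 (by linear_combination -h')
      · intro he
        have h' : c * t + 1 = 1 * (c + 1) := by
          have h2 := congrArg (fun z => z * (c + 1)) he
          simp only [mul_assoc] at h2
          rwa [inv_mul_cancel₀ hc1, mul_one] at h2
        have h2 : c * (t - 1) = 0 := by linear_combination h'
        rcases mul_eq_zero.mp h2 with h | h
        · exact hc0 h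
        · exact ht1 (by linear_combination h)
    · intro v hv
      obtain ⟨hvt, hv1⟩ : v ≠ t ∧ v ≠ 1 := by
        simp only [Finset.mem_sdiff, Finset.mem_univ, true_and, Finset.mem_insert,
          Finset.mem_singleton] at hv
        push_neg at hv
        exact hv
      have htv : t - v ≠ 0 := sub_ne_zero.mpr (Ne.symm hvt)
      have hv1' : v - 1 ≠ 0 := sub_ne_zero.mpr hv1
      simp only [Finset.mem_filter, Finset.mem_univ, true_and]
      constructor
      · exact mul_ne_zero hv1' (inv_ne_zero htv)
      · have he : (v - 1) * (t - v)⁻¹ + 1 = (t - 1) * (t - v)⁻¹ := by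
          field_simp; ring
        rw [he]
        exact mul_ne_zero (sub_ne_zero.mpr ht1) (inv_ne_zero htv)
    · intro c hc
      try dsimp only
      obtain ⟨hc0, hc1⟩ : c ≠ 0 ∧ c + 1 ≠ 0 := by simpa using hc
      have ht1' : t - 1 ≠ 0 := sub_ne_zero.mpr ht1
      have h1 : t - (c * t + 1) * (c + 1)⁻¹ = (t - 1) * (c + 1)⁻¹ := by
        field_simp; ring
      have h2 : (c * t + 1) * (c + 1)⁻¹ - 1 = c * (t - 1) * (c + 1)⁻¹ := by
        field_simp; ring
      rw [h1, h2, mul_inv, inv_inv]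
      field_simp
    · intro v hv
      obtain ⟨hvt, hv1⟩ : v ≠ t ∧ v ≠ 1 := by
        simp only [Finset.mem_sdiff, Finset.mem_univ, true_and, Finset.mem_insert,
          Finset.mem_singleton] at hv
        push_neg at hv
        exact hv
      have htv : t - v ≠ 0 := sub_ne_zero.mpr (Ne.symm hvt)
      have hv1' : v - 1 ≠ 0 := sub_ne_zero.mpr hv1
      have hc1 : (v - 1) * (t - v)⁻¹ + 1 = (t - 1) * (t - v)⁻¹ := by field_simp; ring
      have ht1' : t - 1 ≠ 0 := sub_ne_zero.mpr ht1
      try dsimp only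
      rw [hc1]
      have h2 : (v - 1) * (t - v)⁻¹ * t + 1 = (v*t - t + t - v) * (t - v)⁻¹ := by
        field_simp; ring
      rw [h2, mul_inv, inv_inv]
      field_simp
      ring
    · intro c hc
      rfl
  rw [key, Finset.sum_sdiff_eq_sub (Finset.subset_univ _), sum_chi hp hp6 hg,
    Finset.sum_pair (by exact ht1 : t ≠ 1), chi_one hp hp6 hg]
  ring

noncomputable def Jsum [NeZero p] (hg : ∀ x : ZMod p, x ≠ 0 → ∃ j : ℕ, x = g ^ j) : ℂ :=
  ∑ x : ZMod p, chi hg x * chi hg (x + 1)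

noncomputable def Jsum2 [NeZero p] (hg : ∀ x : ZMod p, x ≠ 0 → ∃ j : ℕ, x = g ^ j) : ℂ :=
  ∑ x : ZMod p, (chi hg x) ^ 2 * (chi hg (x + 1)) ^ 2

lemma JJ2 : Jsum hg * Jsum2 hg = p := by
  haveI : Fact p.Prime := ⟨hp⟩
  classical
  set S : Finset (ZMod p) := univ.filter (fun c : ZMod p => c ≠ 0 ∧ c + 1 ≠ 0) with hSdef
  rw [Jsum, Jsum2, Finset.sum_mul_sum, Finset.sum_comm]
  have hstep : ∀ c : ZMod p,
      (∑ b : ZMod p, (chi hg b * chi hg (b + 1)) * ((chi hg c) ^ 2 * (chi hg (c + 1)) ^ 2)) =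
      if c ∈ S then ∑ t : ZMod p, chi hg t * chi hg ((c * t + 1) * (c + 1)⁻¹) else 0 := by
    intro c
    by_cases hc : c ∈ S
    · rw [if_pos hc]
      obtain ⟨hc0, hc1⟩ : c ≠ 0 ∧ c + 1 ≠ 0 := by simpa [hSdef] using hc
      rw [← Fintype.sum_equiv (Equiv.mulLeft₀ c hc0)
        (fun t => (chi hg (c * t) * chi hg (c * t + 1)) * ((chi hg c) ^ 2 * (chi hg (c + 1)) ^ 2))
        (fun b => (chi hg b * chi hg (b + 1)) * ((chi hg c) ^ 2 * (chi hg (c + 1)) ^ 2))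
        (fun t => rfl)]
      refine Finset.sum_congr rfl (fun t _ => ?_)
      have e1 : chi hg (c * t) = chi hg c * chi hg t := chi_mul' hp hp6 hg hc0 t
      have e2 : chi hg (c * t + 1) = chi hg (c + 1) * chi hg ((c * t + 1) * (c + 1)⁻¹) := by
        rw [← chi_mul' hp hp6 hg hc1]
        congr 1
        field_simp
      have e3 : chi hg c ^ 3 = 1 := chi_cube hp hp6 hg hc0
      have e4 : chi hg (c + 1) ^ 3 = 1 := chi_cube hp hp6 hg hc1
      rw [e1, e2]
      linear_combination (chi hg t * chi hg ((c * t + 1) * (c + 1)⁻¹) * chi hg (c+1) ^ 3) * e3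
        + (chi hg t * chi hg ((c * t + 1) * (c + 1)⁻¹)) * e4
    · rw [if_neg hc]
      refine Finset.sum_eq_zero (fun b _ => ?_)
      have : c = 0 ∨ c + 1 = 0 := by
        by_contra h
        push_neg at h
        exact hc (by simp [hSdef, h.1, h.2])
      rcases this with h | h
      · rw [h, chi_zero]; ring
      · rw [h, chi_zero]; ring
  calc ∑ c : ZMod p, ∑ b : ZMod p, (chi hg b * chi hg (b + 1)) * ((chi hg c) ^ 2 * (chi hg (c + 1)) ^ 2)
      = ∑ c : ZMod p, if c ∈ S then ∑ t : ZMod p, chi hg t * chi hg ((c * t + 1) * (c + 1)⁻¹) else 0 := by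
        exact Finset.sum_congr rfl (fun c _ => hstep c)
    _ = ∑ c ∈ S, ∑ t : ZMod p, chi hg t * chi hg ((c * t + 1) * (c + 1)⁻¹) := by
        rw [Finset.sum_ite_mem, Finset.univ_inter]
    _ = ∑ t : ZMod p, ∑ c ∈ S, chi hg t * chi hg ((c * t + 1) * (c + 1)⁻¹) := Finset.sum_comm
    _ = ∑ t : ZMod p, chi hg t * ∑ c ∈ S, chi hg ((c * t + 1) * (c + 1)⁻¹) := by
        exact Finset.sum_congr rfl (fun t _ => (Finset.mul_sum _ _ _).symm)
    _ = chi hg 1 * (∑ c ∈ S, chi hg ((c * 1 + 1) * (c + 1)⁻¹))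
        + ∑ t ∈ univ.erase 1, chi hg t * ∑ c ∈ S, chi hg ((c * t + 1) * (c + 1)⁻¹) := by
        exact (Finset.add_sum_erase _
          (fun t => chi hg t * ∑ c ∈ S, chi hg ((c * t + 1) * (c + 1)⁻¹))
          (Finset.mem_univ (1 : ZMod p))).symm
    _ = (p - 2 : ℕ) + ∑ t ∈ univ.erase 1, (- (chi hg t)^2 - chi hg t) := by
        congr 1
        · rw [chi_one hp hp6 hg, one_mul]
          have : ∀ c ∈ S, chi hg ((c * 1 + 1) * (c + 1)⁻¹) = 1 := by
            intro c hc
            obtain ⟨hc0, hc1⟩ : c ≠ 0 ∧ c + 1 ≠ 0 := by simpa [hSdef] using hc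
            rw [mul_one, mul_inv_cancel₀ hc1, chi_one hp hp6 hg]
          rw [show (∑ c ∈ S, chi hg ((c * 1 + 1) * (c + 1)⁻¹)) = ∑ _c ∈ S, (1 : ℂ) from
            Finset.sum_congr rfl this, Finset.sum_const, cardS hp hp6 hg, nsmul_eq_mul, mul_one]
        · refine Finset.sum_congr rfl (fun t ht => ?_)
          have ht1 : t ≠ 1 := (Finset.mem_erase.mp ht).1
          rcases eq_or_ne t 0 with rfl | ht0
          · rw [chi_zero]; ring
          · rw [Wlem hp hp6 hg ht0 ht1]; ring
    _ = (p : ℂ) := by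
        rw [Finset.sum_sub_distrib, Finset.sum_neg_distrib, sum_chi_sq_erase hp hp6 hg,
          sum_chi_erase hp hp6 hg, Nat.cast_sub (by have := p7 hp hp6; omega : 2 ≤ p)]
        push_cast
        ring

noncomputable def Mfin [NeZero p] (g : ZMod p) (i k : ZMod 3) : Finset (ZMod p) :=
  univ.filter (fun x => x ∈ Gcoset p g i ∧ x + 1 ∈ Gcoset p g k)

omit hp hp6 hg in
lemma mem_Mfin [NeZero p] {x : ZMod p} {i k : ZMod 3} :
    x ∈ Mfin g i k ↔ x ∈ Gcoset p g i ∧ x + 1 ∈ Gcoset p g k := by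
  simp [Mfin]

lemma transNum_eq {i k : ZMod 3} : transNum p g 1 i k = (Mfin g i k).card := by
  haveI : Fact p.Prime := ⟨hp⟩
  have h7 := p7 hp hp6
  rw [transNum, ← Fintype.card_coe (Mfin g i k), ← Nat.card_eq_fintype_card]
  refine Nat.card_congr ⟨fun b => ⟨(b.1 : ZMod p), ?_⟩, fun x => ⟨x.1.val, ?_⟩, fun b => ?_, fun x => ?_⟩
  · obtain ⟨h1, h2, h3, h4, h5⟩ := b.2
    exact mem_Mfin.mpr ⟨h4, by simpa using h5⟩
  · obtain ⟨hx1, hx2⟩ := mem_Mfin.mp x.2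
    have hx0 : x.1 ≠ 0 := coset_ne_zero hp hp6 hg hx1
    have hxv : ((x.1.val : ℕ) : ZMod p) = x.1 := val_natCast_id x.1
    have hv1 : 1 ≤ x.1.val := by
      rcases Nat.eq_zero_or_pos x.1.val with h | h
      · exact absurd ((ZMod.val_eq_zero x.1).mp h) hx0
      · exact h
    have hvlt : x.1.val < p := ZMod.val_lt x.1
    refine ⟨hv1, by omega, ?_, by rw [hxv]; exact hx1, by rw [hxv, Nat.cast_one]; exact hx2⟩
    intro hcon
    have hxe : x.1 = -1 := by
      rw [← hxv, hcon, Nat.cast_sub (by omega : 1 ≤ p), ZMod.natCast_self, Nat.cast_one]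
      ring
    have : x.1 + 1 = 0 := by rw [hxe]; ring
    exact coset_ne_zero hp hp6 hg hx2 this
  · obtain ⟨h1, h2, h3, h4, h5⟩ := b.2
    exact Subtype.ext (ZMod.val_cast_of_lt (by omega))
  · exact Subtype.ext (val_natCast_id x.1)

lemma Mfin_symm (i k : ZMod 3) : (Mfin g i k).card = (Mfin g k i).card := by
  haveI : Fact p.Prime := ⟨hp⟩
  refine Finset.card_bij' (fun x _ => -1 - x) (fun x _ => -1 - x) ?_ ?_ ?_ ?_
  · intro x hx
    try dsimp only
    obtain ⟨hx1, hx2⟩ := mem_Mfin.mp hx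
    refine mem_Mfin.mpr ⟨?_, ?_⟩
    · rw [show (-1 - x : ZMod p) = -(x + 1) by ring]
      exact neg_mem hp hp6 hg hx2
    · rw [show (-1 - x + 1 : ZMod p) = -x by ring]
      exact neg_mem hp hp6 hg hx1
  · intro x hx
    try dsimp only
    obtain ⟨hx1, hx2⟩ := mem_Mfin.mp hx
    refine mem_Mfin.mpr ⟨?_, ?_⟩
    · rw [show (-1 - x : ZMod p) = -(x + 1) by ring]
      exact neg_mem hp hp6 hg hx2
    · rw [show (-1 - x + 1 : ZMod p) = -x by ring]
      exact neg_mem hp hp6 hg hx1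
  · intro x _; (try dsimp only); ring
  · intro x _; (try dsimp only); ring

lemma Mfin_maps {i k : ZMod 3} {x : ZMod p} (hx : x ∈ Mfin g i k) :
    x⁻¹ ∈ Mfin g (-i) (k - i) := by
  haveI : Fact p.Prime := ⟨hp⟩
  obtain ⟨hx1, hx2⟩ := mem_Mfin.mp hx
  have hx0 : x ≠ 0 := coset_ne_zero hp hp6 hg hx1
  refine mem_Mfin.mpr ⟨mem_inv hp hp6 hg hx1, ?_⟩
  have h1 : (x + 1) * x⁻¹ ∈ Gcoset p g (k + -i) :=
    mem_mul hp hp6 hg hx2 (mem_inv hp hp6 hg hx1)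
  have h2 : x⁻¹ + 1 = (x + 1) * x⁻¹ := by
    rw [add_mul, mul_inv_cancel₀ hx0, one_mul, add_comm]
  rw [h2, sub_eq_add_neg]
  exact h1

lemma Mfin_inv (i k : ZMod 3) : (Mfin g i k).card = (Mfin g (-i) (k - i)).card := by
  haveI : Fact p.Prime := ⟨hp⟩
  refine Finset.card_bij' (fun x _ => x⁻¹) (fun x _ => x⁻¹) ?_ ?_ ?_ ?_
  · intro x hx; exact Mfin_maps hp hp6 hg hx
  · intro x hx
    have := Mfin_maps hp hp6 hg hx
    rwa [neg_neg, sub_neg_eq_add, sub_add_cancel] at this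
  · intro x _; exact inv_inv x
  · intro x _; exact inv_inv x

lemma cardG (i : ZMod 3) :
    (univ.filter (fun x : ZMod p => x ∈ Gcoset p g i)).card = (p - 1) / 3 := by
  classical
  haveI : Fact p.Prime := ⟨hp⟩
  have h7 := p7 hp hp6
  have hm : 3 * ((p - 1) / 3) = p - 1 := by omega
  set m := (p - 1) / 3 with hmdef
  have hval : ((i.val : ℕ) : ZMod 3) = i := val_natCast_id i
  have hvlt : i.val < 3 := ZMod.val_lt i
  have hbij : (Finset.range m).card
      = (univ.filter (fun x : ZMod p => x ∈ Gcoset p g i)).card := by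
    refine Finset.card_bij (fun s _ => g ^ (i.val + 3 * s)) ?_ ?_ ?_
    · intro s hs
      have hsm : s < m := Finset.mem_range.mp hs
      refine Finset.mem_filter.mpr ⟨Finset.mem_univ _, ?_⟩
      have := pow_mem hp hp6 hg (g := g) (i.val + 3 * s)
      have hc : ((i.val + 3 * s : ℕ) : ZMod 3) = i := by
        push_cast
        rw [hval]
        have h3 : ((3 : ℕ) : ZMod 3) = 0 := by
          rw [ZMod.natCast_self]
        push_cast at h3 ⊢
        rw [h3]
        ring
      rwa [hc] at this
    · intro s hs s' hs' he
      have hsm : s < m := Finset.mem_range.mp hs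
      have hsm' : s' < m := Finset.mem_range.mp hs'
      have hmod := pow_inj hp hp6 hg he
      have h1 : (i.val + 3 * s) % (p - 1) = (i.val + 3 * s') % (p - 1) := hmod
      rw [Nat.mod_eq_of_lt (by omega), Nat.mod_eq_of_lt (by omega)] at h1
      omega
    · intro x hx
      obtain ⟨j, hj, hxe⟩ := (Finset.mem_filter.mp hx).2
      have horder' := horder hp hp6 hg
      have hj' : x = g ^ (j % (p - 1)) := by
        rw [hxe, ← pow_mod_orderOf, horder']
      have hmod3 : j % (p - 1) % 3 = j % 3 :=
        Nat.ModEq.of_dvd (three_dvd hp hp6 hg) (Nat.mod_modEq j (p - 1))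
      have hj3 : j % 3 = i.val := by
        rw [← hj, ZMod.val_natCast]
      have hlt : j % (p - 1) < p - 1 := Nat.mod_lt _ (by omega)
      refine ⟨(j % (p - 1)) / 3, Finset.mem_range.mpr (by omega), ?_⟩
      rw [hj']
      try dsimp only
      congr 1
      have hdm : (j % (p-1)) % 3 + 3 * ((j % (p-1)) / 3) = j % (p-1) := Nat.mod_add_div _ 3
      omega
  rw [← hbij, Finset.card_range]

lemma neg_one_not_mem_G1 : (-1 : ZMod p) ∉ Gcoset p g 1 := by
  intro h
  have := coset_unique hp hp6 hg (neg_one_mem hp hp6 hg) h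
  exact absurd this (by decide)

lemma row_aux (i : ZMod 3) :
    (univ.filter (fun x : ZMod p => x ∈ Gcoset p g i ∧ x + 1 ≠ 0)).card
      = (Mfin g i 0).card + (Mfin g i 1).card + (Mfin g i 2).card := by
  classical
  haveI : Fact p.Prime := ⟨hp⟩
  have hunion : (univ.filter (fun x : ZMod p => x ∈ Gcoset p g i ∧ x + 1 ≠ 0))
      = (Mfin g i 0 ∪ Mfin g i 1) ∪ Mfin g i 2 := by
    ext x
    simp only [Finset.mem_filter, Finset.mem_univ, true_and, Finset.mem_union, mem_Mfin]
    constructor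
    · rintro ⟨h1, h2⟩
      obtain ⟨k, hk⟩ := classify hp hp6 hg h2
      rcases zmod3_cases k with rfl | rfl | rfl
      · exact Or.inl (Or.inl ⟨h1, hk⟩)
      · exact Or.inl (Or.inr ⟨h1, hk⟩)
      · exact Or.inr ⟨h1, hk⟩
    · rintro ((⟨h1, h2⟩ | ⟨h1, h2⟩) | ⟨h1, h2⟩) <;>
        exact ⟨h1, coset_ne_zero hp hp6 hg h2⟩
  have hd1 : Disjoint (Mfin g i 0) (Mfin g i 1) := by
    rw [Finset.disjoint_left]
    intro x h1 h2
    have := coset_unique hp hp6 hg (mem_Mfin.mp h1).2 (mem_Mfin.mp h2).2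
    exact absurd this (by decide)
  have hd2 : Disjoint (Mfin g i 0 ∪ Mfin g i 1) (Mfin g i 2) := by
    rw [Finset.disjoint_left]
    intro x h1 h2
    rcases Finset.mem_union.mp h1 with h1 | h1 <;>
    · have := coset_unique hp hp6 hg (mem_Mfin.mp h1).2 (mem_Mfin.mp h2).2
      exact absurd this (by decide)
  rw [hunion, Finset.card_union_of_disjoint hd2, Finset.card_union_of_disjoint hd1]

lemma row0 : (Mfin g 0 0).card + (Mfin g 0 1).card + (Mfin g 0 2).card + 1 = (p - 1) / 3 := by
  classical
  haveI : Fact p.Prime := ⟨hp⟩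
  have h := row_aux hp hp6 hg 0
  have he : (univ.filter (fun x : ZMod p => x ∈ Gcoset p g 0 ∧ x + 1 ≠ 0))
      = (univ.filter (fun x : ZMod p => x ∈ Gcoset p g 0)).erase (-1) := by
    ext x
    simp only [Finset.mem_filter, Finset.mem_univ, true_and, Finset.mem_erase]
    constructor
    · rintro ⟨h1, h2⟩
      exact ⟨fun hc => h2 (by rw [hc]; ring), h1⟩
    · rintro ⟨h1, h2⟩
      refine ⟨h2, fun hc => h1 ?_⟩
      linear_combination hc
  have hmem : (-1 : ZMod p) ∈ univ.filter (fun x : ZMod p => x ∈ Gcoset p g 0) :=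
    Finset.mem_filter.mpr ⟨Finset.mem_univ _, neg_one_mem hp hp6 hg⟩
  have hcard := cardG hp hp6 hg 0
  have hpos : 1 ≤ (univ.filter (fun x : ZMod p => x ∈ Gcoset p g 0)).card :=
    Finset.card_pos.mpr ⟨-1, hmem⟩
  rw [he, Finset.card_erase_of_mem hmem, hcard] at h
  omega

lemma row1 : (Mfin g 1 0).card + (Mfin g 1 1).card + (Mfin g 1 2).card = (p - 1) / 3 := by
  classical
  haveI : Fact p.Prime := ⟨hp⟩
  have h := row_aux hp hp6 hg 1
  have he : (univ.filter (fun x : ZMod p => x ∈ Gcoset p g 1 ∧ x + 1 ≠ 0))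
      = univ.filter (fun x : ZMod p => x ∈ Gcoset p g 1) := by
    ext x
    simp only [Finset.mem_filter, Finset.mem_univ, true_and, and_iff_left_iff_imp]
    intro h1 hc
    have hx : x = -1 := by linear_combination hc
    subst hx
    exact neg_one_not_mem_G1 hp hp6 hg h1
  rw [he, cardG hp hp6 hg 1] at h
  omega

omit hp hp6 hg in
lemma sum_zmod3 (f : ZMod 3 → ℂ) : ∑ i : ZMod 3, f i = f 0 + f 1 + f 2 := by
  show ∑ i : Fin 3, f i = _
  exact Fin.sum_univ_three _

lemma chi_term_eq (x : ZMod p) :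
    chi hg x * chi hg (x + 1) =
      ∑ ik : ZMod 3 × ZMod 3, if x ∈ Mfin g ik.1 ik.2
        then ω ^ ((ik.1.val + ik.2.val) % 3) else 0 := by
  haveI : Fact p.Prime := ⟨hp⟩
  rcases eq_or_ne x 0 with rfl | hx0
  · rw [chi_zero, zero_mul]
    refine (Finset.sum_eq_zero fun ik _ => ?_).symm
    rw [if_neg]
    intro hmem
    exact (coset_ne_zero hp hp6 hg (mem_Mfin.mp hmem).1) rfl
  rcases eq_or_ne (x + 1) 0 with hx1 | hx1
  · rw [hx1, chi_zero, mul_zero]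
    refine (Finset.sum_eq_zero fun ik _ => ?_).symm
    rw [if_neg]
    intro hmem
    exact (coset_ne_zero hp hp6 hg (mem_Mfin.mp hmem).2) hx1
  obtain ⟨i0, hi0⟩ := classify hp hp6 hg hx0
  obtain ⟨k0, hk0⟩ := classify hp hp6 hg hx1
  rw [Finset.sum_eq_single (i0, k0)]
  · rw [if_pos (mem_Mfin.mpr ⟨hi0, hk0⟩), chi_coset hp hp6 hg hi0, chi_coset hp hp6 hg hk0,
      ← pow_add, omega_pow_mod]
  · intro ik _ hne
    rw [if_neg]
    intro hmem
    obtain ⟨h1, h2⟩ := mem_Mfin.mp hmem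
    exact hne (Prod.ext (coset_unique hp hp6 hg h1 hi0) (coset_unique hp hp6 hg h2 hk0))
  · intro h; exact absurd (Finset.mem_univ _) h

lemma chi_term_sq_eq (x : ZMod p) :
    (chi hg x) ^ 2 * (chi hg (x + 1)) ^ 2 =
      ∑ ik : ZMod 3 × ZMod 3, if x ∈ Mfin g ik.1 ik.2
        then ω ^ ((ik.1.val * 2 + ik.2.val * 2) % 3) else 0 := by
  haveI : Fact p.Prime := ⟨hp⟩
  rcases eq_or_ne x 0 with rfl | hx0
  · rw [chi_zero]
    refine Eq.trans (by ring) (Finset.sum_eq_zero fun ik _ => ?_).symm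
    rw [if_neg]
    intro hmem
    exact (coset_ne_zero hp hp6 hg (mem_Mfin.mp hmem).1) rfl
  rcases eq_or_ne (x + 1) 0 with hx1 | hx1
  · rw [hx1, chi_zero]
    refine Eq.trans (by ring) (Finset.sum_eq_zero fun ik _ => ?_).symm
    rw [if_neg]
    intro hmem
    exact (coset_ne_zero hp hp6 hg (mem_Mfin.mp hmem).2) hx1
  obtain ⟨i0, hi0⟩ := classify hp hp6 hg hx0
  obtain ⟨k0, hk0⟩ := classify hp hp6 hg hx1
  rw [Finset.sum_eq_single (i0, k0)]
  · rw [if_pos (mem_Mfin.mpr ⟨hi0, hk0⟩), chi_coset hp hp6 hg hi0, chi_coset hp hp6 hg hk0,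
      ← pow_mul, ← pow_mul, ← pow_add, omega_pow_mod]
  · intro ik _ hne
    rw [if_neg]
    intro hmem
    obtain ⟨h1, h2⟩ := mem_Mfin.mp hmem
    exact hne (Prod.ext (coset_unique hp hp6 hg h1 hi0) (coset_unique hp hp6 hg h2 hk0))
  · intro h; exact absurd (Finset.mem_univ _) h

lemma sum_indicator (s : Finset (ZMod p)) (w : ℂ) :
    (∑ x : ZMod p, if x ∈ s then w else 0) = (s.card : ℂ) * w := by
  haveI : Fact p.Prime := ⟨hp⟩
  rw [Finset.sum_ite_mem, Finset.univ_inter, Finset.sum_const, nsmul_eq_mul]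

lemma J_eval :
    Jsum hg = (((Mfin g 0 0).card : ℂ) + (Mfin g 1 2).card + (Mfin g 2 1).card)
      + (((Mfin g 0 1).card : ℂ) + (Mfin g 1 0).card + (Mfin g 2 2).card) * ω
      + (((Mfin g 0 2).card : ℂ) + (Mfin g 1 1).card + (Mfin g 2 0).card) * ω ^ 2 := by
  haveI : Fact p.Prime := ⟨hp⟩
  rw [Jsum]
  calc ∑ x : ZMod p, chi hg x * chi hg (x + 1)
      = ∑ x : ZMod p, ∑ ik : ZMod 3 × ZMod 3, (if x ∈ Mfin g ik.1 ik.2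
          then ω ^ ((ik.1.val + ik.2.val) % 3) else 0) :=
        Finset.sum_congr rfl (fun x _ => chi_term_eq hp hp6 hg x)
    _ = ∑ ik : ZMod 3 × ZMod 3, ∑ x : ZMod p, (if x ∈ Mfin g ik.1 ik.2
          then ω ^ ((ik.1.val + ik.2.val) % 3) else 0) := Finset.sum_comm
    _ = ∑ ik : ZMod 3 × ZMod 3, ((Mfin g ik.1 ik.2).card : ℂ) * ω ^ ((ik.1.val + ik.2.val) % 3) :=
        Finset.sum_congr rfl (fun ik _ => sum_indicator hp hp6 hg _ _)
    _ = ∑ i : ZMod 3, ∑ k : ZMod 3, ((Mfin g i k).card : ℂ) * ω ^ ((i.val + k.val) % 3) :=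
        Fintype.sum_prod_type _
    _ = _ := by
        rw [sum_zmod3, sum_zmod3, sum_zmod3, sum_zmod3]
        norm_num [show (0 : ZMod 3).val = 0 from rfl, show (1 : ZMod 3).val = 1 from rfl,
          show (2 : ZMod 3).val = 2 from rfl]
        ring

lemma J2_eval :
    Jsum2 hg = (((Mfin g 0 0).card : ℂ) + (Mfin g 1 2).card + (Mfin g 2 1).card)
      + (((Mfin g 0 2).card : ℂ) + (Mfin g 1 1).card + (Mfin g 2 0).card) * ω
      + (((Mfin g 0 1).card : ℂ) + (Mfin g 1 0).card + (Mfin g 2 2).card) * ω ^ 2 := by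
  haveI : Fact p.Prime := ⟨hp⟩
  rw [Jsum2]
  calc ∑ x : ZMod p, (chi hg x) ^ 2 * (chi hg (x + 1)) ^ 2
      = ∑ x : ZMod p, ∑ ik : ZMod 3 × ZMod 3, (if x ∈ Mfin g ik.1 ik.2
          then ω ^ ((ik.1.val * 2 + ik.2.val * 2) % 3) else 0) :=
        Finset.sum_congr rfl (fun x _ => chi_term_sq_eq hp hp6 hg x)
    _ = ∑ ik : ZMod 3 × ZMod 3, ∑ x : ZMod p, (if x ∈ Mfin g ik.1 ik.2
          then ω ^ ((ik.1.val * 2 + ik.2.val * 2) % 3) else 0) := Finset.sum_comm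
    _ = ∑ ik : ZMod 3 × ZMod 3, ((Mfin g ik.1 ik.2).card : ℂ)
          * ω ^ ((ik.1.val * 2 + ik.2.val * 2) % 3) :=
        Finset.sum_congr rfl (fun ik _ => sum_indicator hp hp6 hg _ _)
    _ = ∑ i : ZMod 3, ∑ k : ZMod 3, ((Mfin g i k).card : ℂ) * ω ^ ((i.val * 2 + k.val * 2) % 3) :=
        Fintype.sum_prod_type _
    _ = _ := by
        rw [sum_zmod3, sum_zmod3, sum_zmod3, sum_zmod3]
        norm_num [show (0 : ZMod 3).val = 0 from rfl, show (1 : ZMod 3).val = 1 from rfl,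
          show (2 : ZMod 3).val = 2 from rfl]
        ring

lemma key_quadratic :
    (((Mfin g 0 0).card : ℤ) + 2 * (Mfin g 1 2).card - 3 * (Mfin g 0 2).card) ^ 2
      - (((Mfin g 0 0).card : ℤ) + 2 * (Mfin g 1 2).card - 3 * (Mfin g 0 2).card)
        * (3 * ((Mfin g 0 1).card : ℤ) - 3 * (Mfin g 0 2).card)
      + (3 * ((Mfin g 0 1).card : ℤ) - 3 * (Mfin g 0 2).card) ^ 2 = p := by
  haveI : Fact p.Prime := ⟨hp⟩
  have e21 : (Mfin g 2 1).card = (Mfin g 1 2).card := Mfin_symm hp hp6 hg 2 1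
  have e10 : (Mfin g 1 0).card = (Mfin g 0 1).card := Mfin_symm hp hp6 hg 1 0
  have e20 : (Mfin g 2 0).card = (Mfin g 0 2).card := Mfin_symm hp hp6 hg 2 0
  have e11 : (Mfin g 1 1).card = (Mfin g 0 2).card := by
    have h1 := Mfin_inv hp hp6 hg 1 1
    rw [show (-1 : ZMod 3) = 2 by decide, show (1 - 1 : ZMod 3) = 0 by decide] at h1
    rw [h1, e20]
  have e22 : (Mfin g 2 2).card = (Mfin g 0 1).card := by
    have h1 := Mfin_inv hp hp6 hg 2 2
    rw [show (-2 : ZMod 3) = 1 by decide, show (2 - 2 : ZMod 3) = 0 by decide] at h1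
    rw [h1, e10]
  have hJ := J_eval hp hp6 hg
  have hJ2 := J2_eval hp hp6 hg
  rw [e21, e10, e20, e11, e22] at hJ hJ2
  have hP := JJ2 hp hp6 hg
  rw [hJ, hJ2] at hP
  set a := ((Mfin g 0 0).card : ℂ) with ha
  set b := ((Mfin g 0 1).card : ℂ) with hb
  set c := ((Mfin g 0 2).card : ℂ) with hc
  set d := ((Mfin g 1 2).card : ℂ) with hd
  have hC : ((a + 2*d) - 3*c) ^ 2 - ((a + 2*d) - 3*c) * (3*b - 3*c) + (3*b - 3*c) ^ 2
      = (p : ℂ) := by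
    linear_combination hP - ((a + 2*d)*(3*b) + (a + 2*d)*(3*c) + (3*b)*(3*c)) * omega_sum
      - ((3*b)^2 + (3*c)^2 + (3*b)*(3*c)*ω) * omega_cube
  apply Int.cast_injective (α := ℂ)
  push_cast
  linear_combination hC

omit hp hp6 hg in
lemma uniq {q A B C D : ℤ} (hq : Prime q) (hq7 : 7 ≤ q) (hA : A % 3 = 1) (hC : C % 3 = 1)
    (hB : 0 < B) (hD : 0 < D) (h1 : 4 * q = A ^ 2 + 27 * B ^ 2)
    (h2 : 4 * q = C ^ 2 + 27 * D ^ 2) : A = C ∧ B = D := by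
  have hq0 : (0 : ℤ) < q := by omega
  have hdvd : q ∣ (A * D - B * C) * (A * D + B * C) :=
    ⟨4 * (D ^ 2 - B ^ 2), by linear_combination B ^ 2 * h2 - D ^ 2 * h1⟩
  have hBD : D ^ 2 = B ^ 2 → B = D := by
    intro h
    have hfac : (D - B) * (D + B) = 0 := by linear_combination h
    rcases mul_eq_zero.mp hfac with h' | h'
    · omega
    · omega
  rcases (hq.dvd_mul).mp hdvd with hcase | hcase
  · obtain ⟨k, hk⟩ := hcase
    have hid : (A * C + 27 * B * D) ^ 2 + 27 * (A * D - B * C) ^ 2 = 16 * q ^ 2 := by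
      linear_combination -(C ^ 2 + 27 * D ^ 2) * h1 - 4 * q * h2
    have hk0 : k = 0 := by
      by_contra hk0
      have h1k : 1 ≤ k ^ 2 := by
        rcases lt_or_gt_of_ne hk0 with h | h <;> nlinarith
      rw [hk] at hid
      nlinarith [mul_nonneg (by linarith : (0:ℤ) ≤ k ^ 2 - 1) (sq_nonneg q),
        sq_nonneg (A * C + 27 * B * D), hq0, sq_nonneg q]
    have hADBC : A * D = B * C := by
      have := hk; rw [hk0, mul_zero] at this; linarith
    have hD2 : D ^ 2 = B ^ 2 := by
      have h4 : 4 * q * (D ^ 2 - B ^ 2) = 0 := by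
        linear_combination D ^ 2 * h1 - B ^ 2 * h2 + (A * D + B * C) * (by linarith : A * D - B * C = 0)
      have := mul_eq_zero.mp h4
      rcases this with h' | h'
      · exfalso; omega
      · linarith
    have hBDe : B = D := hBD hD2
    have hA2 : A ^ 2 = C ^ 2 := by
      rw [hBDe] at h1; linarith
    have hfac : (A - C) * (A + C) = 0 := by linear_combination hA2
    rcases mul_eq_zero.mp hfac with h' | h'
    · exact ⟨by omega, hBDe⟩
    · exfalso; omega
  · obtain ⟨k, hk⟩ := hcase
    have hid : (A * C - 27 * B * D) ^ 2 + 27 * (A * D + B * C) ^ 2 = 16 * q ^ 2 := by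
      linear_combination -(C ^ 2 + 27 * D ^ 2) * h1 - 4 * q * h2
    have hk0 : k = 0 := by
      by_contra hk0
      have h1k : 1 ≤ k ^ 2 := by
        rcases lt_or_gt_of_ne hk0 with h | h <;> nlinarith
      rw [hk] at hid
      nlinarith [mul_nonneg (by linarith : (0:ℤ) ≤ k ^ 2 - 1) (sq_nonneg q),
        sq_nonneg (A * C - 27 * B * D), hq0, sq_nonneg q]
    have hADBC : A * D = - (B * C) := by
      have := hk; rw [hk0, mul_zero] at this; linarith
    have hD2 : D ^ 2 = B ^ 2 := by
      have h4 : 4 * q * (D ^ 2 - B ^ 2) = 0 := by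
        linear_combination D ^ 2 * h1 - B ^ 2 * h2 + (A * D - B * C) * (by linarith : A * D + B * C = 0)
      rcases mul_eq_zero.mp h4 with h' | h'
      · exfalso; omega
      · linarith
    have hBDe : B = D := hBD hD2
    exfalso
    have hAC : A = - C := by
      rw [← hBDe] at hADBC
      have hBne : B ≠ 0 := by omega
      have := mul_right_cancel₀ hBne (by linarith : A * B = (-C) * B)
      exact this
    omega

omit hp hp6 hg in
lemma not_four_sq {q A' : ℤ} (hq : Prime q) (hq7 : 7 ≤ q) (hA3 : A' % 3 = 1)
    (h : 4 * q = A' ^ 2) : False := by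
  have hq0 : (0 : ℤ) < q := by omega
  have hpd : q ∣ A' ^ 2 := ⟨4, by linarith⟩
  obtain ⟨s, hs⟩ := hq.dvd_of_dvd_pow hpd
  have hs0 : s ≠ 0 := by
    rintro rfl
    rw [mul_zero] at hs
    rw [hs] at hA3
    omega
  have h1s : 1 ≤ s ^ 2 := by
    rcases lt_or_gt_of_ne hs0 with h' | h' <;> nlinarith
  have h2 : 4 * q = q ^ 2 * s ^ 2 := by rw [hs] at h; linarith [h]; 
  nlinarith [mul_nonneg (mul_nonneg hq0.le hq0.le) (by linarith : (0:ℤ) ≤ s ^ 2 - 1)]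

end Stmt7

open Stmt7 in
theorem stmt_7 (p : ℕ) (hp : p.Prime) (hp6 : p % 6 = 1)
    (g : ZMod p) (hg : ∀ x : ZMod p, x ≠ 0 → ∃ j : ℕ, x = g ^ j)
    (A B : ℤ) (hA : A % 3 = 1) (hB : 0 < B) (hAB : 4 * (p : ℤ) = A ^ 2 + 27 * B ^ 2) :
    A = 9 * (transNum p g 1 1 2 : ℤ) - p - 1 ∧
    B = |(transNum p g 1 0 2 : ℤ) - (transNum p g 1 0 1 : ℤ)| := by
  haveI : Fact p.Prime := ⟨hp⟩
  have h7 : 7 ≤ p := p7 hp hp6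
  set a := (Mfin g 0 0).card with hadef
  set b := (Mfin g 0 1).card with hbdef
  set c := (Mfin g 0 2).card with hcdef
  set d := (Mfin g 1 2).card with hddef
  -- row relations
  have hm3 : 3 * ((p - 1) / 3) = p - 1 := by omega
  have hrow0 : a + b + c + 1 = (p - 1) / 3 := row0 hp hp6 hg
  have hrow1 : b + c + d = (p - 1) / 3 := by
    have h := row1 hp hp6 hg
    rwa [Mfin_symm hp hp6 hg 1 0, show (Mfin g 1 1).card = c from by
      have h1 := Mfin_inv hp hp6 hg 1 1
      rw [show (-1 : ZMod 3) = 2 by decide, show (1 - 1 : ZMod 3) = 0 by decide] at h1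
      rw [h1]; exact Mfin_symm hp hp6 hg 2 0] at h
  have hkey := key_quadratic hp hp6 hg
  -- integer abbreviations
  set x : ℤ := (a : ℤ) + 2 * d - 3 * c with hxdef
  set y : ℤ := 3 * (b : ℤ) - 3 * c with hydef
  have hA'eq : 2 * x - y = 9 * (d : ℤ) - p - 1 := by
    rw [hxdef, hydef]
    omega
  have h4p : 4 * (p : ℤ) = (9 * (d : ℤ) - p - 1) ^ 2 + 27 * ((c : ℤ) - b) ^ 2 := by
    linear_combination -4 * hkey + ((9 * (d : ℤ) - p - 1) + (2 * x - y)) * hA'eq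
  have hA'3 : (9 * (d : ℤ) - p - 1) % 3 = 1 := by
    have hp3 : (p : ℤ) % 3 = 1 := by
      have : p % 3 = 1 := by omega
      omega
    omega
  have hprime : Prime ((p : ℤ)) := Nat.prime_iff_prime_int.mp hp
  have hq7 : (7 : ℤ) ≤ p := by exact_mod_cast h7
  have hcb : (c : ℤ) ≠ b := by
    intro he
    rw [he, sub_self] at h4p
    refine not_four_sq hprime hq7 hA'3 ?_
    linarith [h4p]
  have hBpos : 0 < |(c : ℤ) - b| := abs_pos.mpr (sub_ne_zero.mpr hcb)
  have h4p' : 4 * (p : ℤ) = (9 * (d : ℤ) - p - 1) ^ 2 + 27 * |(c : ℤ) - b| ^ 2 := by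
    rw [sq_abs]; exact h4p
  obtain ⟨hAeq, hBeq⟩ := uniq hprime hq7 hA hA'3 hB hBpos hAB h4p'
  constructor
  · rw [hAeq, transNum_eq hp hp6 hg]
  · rw [hBeq, transNum_eq hp hp6 hg (i := 0) (k := 2), transNum_eq hp hp6 hg (i := 0) (k := 1)]
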